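/- Let (r_k)_{k≥0} be a normalized KdV resolvent and let g_k ∈ 𝓡 be the image of r_k under the substitution u_{x^α} ↦ v_{x^{α+1}}. Then for all i, j ≥ 1 there exists a differential polynomial b_{ij} ∈ 𝓡 with zero constant term such that D_x(b_{ij}) = D_x(g_i)·g_j. -/

import Mathlib

open MvPolynomial

noncomputable section

/-- The ring `𝓡_u = ℝ[u_{x^α} : α ∈ ℕ]` of differential polynomials in one variable `x`:
the variable `X α` stands for `u_{x^α}` (so `X 0 = u`, `X 1 = u_x`, …). -/
abbrev DiffPoly1 := MvPolynomial ℕ ℝ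

/-- The total derivative `D_x`, determined by `D_x (u_{x^α}) = u_{x^{α+1}}`. -/
noncomputable def Dx : Derivation ℝ DiffPoly1 DiffPoly1 :=
  MvPolynomial.mkDerivation ℝ fun α => X (α + 1)

/-- The variational derivative `δf/δu := Σ_α (−1)^α D_x^α (∂f/∂u_{x^α})`. -/
noncomputable def varDerivU (f : DiffPoly1) : DiffPoly1 :=
  ∑ᶠ α : ℕ, (-1 : ℝ) ^ α • (fun p => Dx p)^[α] (pderiv α f)

/-- A normalized KdV resolvent: a sequence `(r_k)` with `r_0 = 1/2`,
`D_x(r_{k+1}) = D_x³(r_k) + 4u·D_x(r_k) + 2u_x·r_k`, normalized so that for `k ≥ 1`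
`Σ_{a+b=k−1}( r_a·D_x²(r_b) − ½·D_x(r_a)·D_x(r_b) + 2u·r_a·r_b ) = ½·Σ_{a+b=k} r_a·r_b`. -/
def IsNormalizedKdVResolvent (r : ℕ → DiffPoly1) : Prop :=
  r 0 = C (1 / 2) ∧
  (∀ k : ℕ, Dx (r (k + 1)) =
      (fun p => Dx p)^[3] (r k) + (4 : ℝ) • (X 0 * Dx (r k)) + (2 : ℝ) • (X 1 * r k)) ∧
  (∀ k : ℕ, 1 ≤ k →
    ∑ p ∈ Finset.HasAntidiagonal.antidiagonal (k - 1),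
        (r p.1 * (fun q => Dx q)^[2] (r p.2)
          - (1 / 2 : ℝ) • (Dx (r p.1) * Dx (r p.2))
          + (2 : ℝ) • (X 0 * (r p.1 * r p.2)))
      = (1 / 2 : ℝ) • ∑ p ∈ Finset.HasAntidiagonal.antidiagonal k, r p.1 * r p.2)

/-- The substitution `u_{x^α} ↦ v_{x^{α+1}}`, mapping `r_k[u]` to `g_k[v] = r_k[v_x]`
(in the ring `𝓡 = ℝ[v_{x^α}]`, where now `X α` stands for `v_{x^α}`). -/
noncomputable def substShift : DiffPoly1 →ₐ[ℝ] DiffPoly1 :=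
  aeval fun α => X (α + 1)


/-! ### Auxiliary lemmas -/

lemma Dx_C' (a : ℝ) : Dx (C a) = 0 := by
  rw [show (C a : DiffPoly1) = algebraMap ℝ DiffPoly1 a from rfl]
  exact Dx.map_algebraMap a

lemma Dx_X' (n : ℕ) : Dx (X n) = X (n + 1) := mkDerivation_X ℝ _ n

lemma substShift_Dx (p : DiffPoly1) : substShift (Dx p) = Dx (substShift p) := by
  induction p using MvPolynomial.induction_on with
  | C a =>
      rw [Dx_C', map_zero, substShift, aeval_C]
      exact (Dx.map_algebraMap a).symm
  | add p q hp hq => rw [Dx.map_add, map_add, hp, hq, map_add, Dx.map_add]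
  | mul_X p n hp =>
      have h1 : substShift (p * X n) = substShift p * X (n + 1) := by
        rw [map_mul]; simp [substShift]
      rw [h1, Dx.leibniz, Dx.leibniz, smul_eq_mul, smul_eq_mul, smul_eq_mul,
        smul_eq_mul, map_add, map_mul, map_mul, hp, Dx_X', Dx_X']
      simp [substShift]

section
variable (r : ℕ → DiffPoly1)
  (hrec : ∀ k : ℕ, Dx (r (k + 1)) =
      (fun p => Dx p)^[3] (r k) + (4 : ℝ) • (X 0 * Dx (r k)) + (2 : ℝ) • (X 1 * r k))

include hrec

lemma Dx_r1 (h0 : r 0 = C (1/2)) : Dx (r 1) = X 1 := by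
  have := hrec 0
  rw [h0] at this
  simp only [Function.iterate_succ, Function.iterate_zero, Function.comp_apply, id_eq, Dx_C',
    map_zero, mul_zero, smul_zero, zero_add, add_zero, smul_eq_C_mul] at this
  rw [this, mul_comm (X 1) (C (1/2 : ℝ)), ← mul_assoc, ← C_mul]
  norm_num

lemma Dx_base (j : ℕ) :
    Dx (r (j + 1) - Dx (Dx (r j)) - (4 : ℝ) • (X 0 * r j)) = (-2 : ℝ) • (X 1 * r j) := by
  have h := hrec j
  simp only [Function.iterate_succ, Function.iterate_zero, Function.comp_apply, id_eq] at h
  simp only [Dx.map_sub, Dx.map_smul, Dx.leibniz, smul_eq_mul, Dx_X', h]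
  simp only [smul_eq_C_mul, map_ofNat, map_neg]
  ring

lemma Dx_key (i j : ℕ) :
    Dx (r j * Dx (Dx (r i)) + r i * Dx (Dx (r j)) - Dx (r i) * Dx (r j)
        + (4 : ℝ) • (X 0 * (r i * r j)))
      = Dx (r (i + 1)) * r j + Dx (r (j + 1)) * r i := by
  have hi := hrec i
  have hj := hrec j
  simp only [Function.iterate_succ, Function.iterate_zero, Function.comp_apply, id_eq] at hi hj
  simp only [Dx.map_sub, Dx.map_add, Dx.map_smul, Dx.leibniz, smul_eq_mul, Dx_X', hi, hj]
  simp only [smul_eq_C_mul, map_ofNat, map_neg]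
  ring

lemma exact_mul (h0 : r 0 = C (1/2)) :
    ∀ i, 1 ≤ i → ∀ j, ∃ h : DiffPoly1, Dx h = Dx (r i) * r j := by
  intro i hi
  induction i, hi using Nat.le_induction with
  | base =>
      intro j
      refine ⟨(-(1/2) : ℝ) • (r (j + 1) - Dx (Dx (r j)) - (4 : ℝ) • (X 0 * r j)), ?_⟩
      rw [Dx.map_smul, Dx_base r hrec j, Dx_r1 r hrec h0, smul_smul]
      norm_num
  | succ i hi ih =>
      intro j
      obtain ⟨h, hh⟩ := ih (j + 1)
      refine ⟨(r j * Dx (Dx (r i)) + r i * Dx (Dx (r j)) - Dx (r i) * Dx (r j)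
          + (4 : ℝ) • (X 0 * (r i * r j))) - r i * r (j + 1) + h, ?_⟩
      rw [Dx.map_add, Dx.map_sub, Dx_key r hrec i j, hh, Dx.leibniz, smul_eq_mul, smul_eq_mul]
      ring

end

/-- for `g_k := r_k[v_x]` and `i, j ≥ 1` there exists `b_{ij}` with zero
constant term and `D_x(b_{ij}) = D_x(g_i)·g_j`. -/
theorem stmt_14 (r : ℕ → DiffPoly1) (hr : IsNormalizedKdVResolvent r) :
    ∀ i j : ℕ, 1 ≤ i → 1 ≤ j →
      ∃ b : DiffPoly1, constantCoeff b = 0 ∧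
        Dx b = Dx (substShift (r i)) * substShift (r j) := by
  obtain ⟨h0, hrec, -⟩ := hr
  intro i j hi hj
  obtain ⟨h, hh⟩ := exact_mul r hrec h0 i hi j
  refine ⟨substShift h - C (constantCoeff (substShift h)), ?_, ?_⟩
  · rw [map_sub, constantCoeff_C, sub_self]
  · rw [Dx.map_sub, Dx_C', sub_zero, ← substShift_Dx, hh, map_mul, substShift_Dx]
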